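/- arXiv:1307.0459 — 8 statements merged into one kernel-verified Lean document; each statement's English description precedes it below -/
import Mathlib

section
/- Let x: N_1 → ℝ^n\{0} and y: N_2 → ℝ^m\{0} be isometric immersions of Riemannian manifolds. Then the pullback of the Euclidean metric on ℝ^{nm} ≅ ℝ^n ⊗ ℝ^m under the tensor product map ψ(u,v) = x(u) ⊗ y(v) equals ρ_2² g_1 + ρ_1² g_2 + 2 ρ_1 ρ_2 dρ_1 ⊗ dρ_2 (symmetrized), where ρ_1 = |x|, ρ_2 = |y| are the Euclidean distance functions from the origin. -/
noncomputable def tmulCLM (n m : ℕ) :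
    EuclideanSpace ℝ (Fin n) →L[ℝ] EuclideanSpace ℝ (Fin m) →L[ℝ] EuclideanSpace ℝ (Fin n × Fin m) :=
  LinearMap.toContinuousLinearMap
  { toFun := fun a => LinearMap.toContinuousLinearMap
      { toFun := fun b => (WithLp.toLp 2 (fun (jα : Fin n × Fin m) => a jα.1 * b jα.2) : EuclideanSpace ℝ (Fin n × Fin m))
        map_add' := fun b c => by ext jα; simp [mul_add]
        map_smul' := fun r b => by ext jα; simp; ring }
    map_add' := fun a c => by ext b jα; simp [add_mul]
    map_smul' := fun r a => by ext b jα; simp; ring }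

lemma tmulCLM_apply (n m : ℕ) (a : EuclideanSpace ℝ (Fin n)) (b : EuclideanSpace ℝ (Fin m))
    (jα : Fin n × Fin m) : tmulCLM n m a b jα = a jα.1 * b jα.2 := rfl

lemma inner_tmul (n m : ℕ) (a c : EuclideanSpace ℝ (Fin n)) (b d : EuclideanSpace ℝ (Fin m)) :
    (inner ℝ (tmulCLM n m a b) (tmulCLM n m c d) : ℝ) = (inner ℝ a c : ℝ) * (inner ℝ b d : ℝ) := by
  simp only [PiLp.inner_apply, RCLike.inner_apply, conj_trivial, tmulCLM_apply]
  rw [Fintype.sum_prod_type, Finset.sum_mul_sum]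
  exact Finset.sum_congr rfl fun j _ => Finset.sum_congr rfl fun α _ => by ring

lemma fderiv_norm_eq' {E F : Type*} [NormedAddCommGroup E] [NormedSpace ℝ E]
    [NormedAddCommGroup F] [InnerProductSpace ℝ F] {f : E → F} (hf : Differentiable ℝ f)
    {u : E} (h : f u ≠ 0) (X : E) :
    fderiv ℝ (fun u' => ‖f u'‖) u X = (inner ℝ (f u) (fderiv ℝ f u X) : ℝ) / ‖f u‖ := by
  have h1 : HasFDerivAt (fun u' => ‖f u'‖ ^ 2)
      (2 • (innerSL ℝ (f u)).comp (fderiv ℝ f u)) u := (hf u).hasFDerivAt.norm_sq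
  have hne : ‖f u‖ ^ 2 ≠ 0 := pow_ne_zero 2 (norm_ne_zero_iff.2 h)
  have h2 := h1.sqrt hne
  have heq : (fun u' => Real.sqrt (‖f u'‖ ^ 2)) = fun u' => ‖f u'‖ := by
    funext u'; exact Real.sqrt_sq (norm_nonneg _)
  rw [heq] at h2
  rw [h2.fderiv]
  have hn : ‖f u‖ ≠ 0 := norm_ne_zero_iff.2 h
  simp [Real.sqrt_sq (norm_nonneg (f u))]
  field_simp




/-- The pullback of the Euclidean metric on `ℝ^n ⊗ ℝ^m ≅ ℝ^{nm}` under the tensor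
product map `ψ(u,v) = x(u) ⊗ y(v)` of two isometric immersions (here expressed in
local coordinates, so that the metrics `g₁, g₂` are the pullbacks of the Euclidean
metrics under `x` and `y`) equals the convolution metric
`ρ₂² g₁ + ρ₁² g₂ + 2 ρ₁ ρ₂ dρ₁ ⊙ dρ₂`, where `ρ₁ = |x|`, `ρ₂ = |y|`. -/
theorem pullback_of_tensor_product_map_is_convolution (n m : ℕ)
    {E1 E2 : Type*} [NormedAddCommGroup E1] [NormedSpace ℝ E1]
    [NormedAddCommGroup E2] [NormedSpace ℝ E2]
    (x : E1 → EuclideanSpace ℝ (Fin n)) (y : E2 → EuclideanSpace ℝ (Fin m))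
    (hx : Differentiable ℝ x) (hy : Differentiable ℝ y)
    (u : E1) (v : E2) (hxu : x u ≠ 0) (hyv : y v ≠ 0)
    (X1 Y1 : E1) (X2 Y2 : E2) :
    let ψ : E1 × E2 → EuclideanSpace ℝ (Fin n × Fin m) :=
      fun q => WithLp.toLp 2 (fun (jα : Fin n × Fin m) => x q.1 jα.1 * y q.2 jα.2)
    let ρ1 : E1 → ℝ := fun u' => ‖x u'‖
    let ρ2 : E2 → ℝ := fun v' => ‖y v'‖
    (inner ℝ (fderiv ℝ ψ (u, v) (X1, X2)) (fderiv ℝ ψ (u, v) (Y1, Y2)) : ℝ) =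
      (ρ2 v) ^ 2 * (inner ℝ (fderiv ℝ x u X1) (fderiv ℝ x u Y1) : ℝ)
      + (ρ1 u) ^ 2 * (inner ℝ (fderiv ℝ y v X2) (fderiv ℝ y v Y2) : ℝ)
      + (ρ1 u) * (ρ2 v) *
          (fderiv ℝ ρ1 u X1 * fderiv ℝ ρ2 v Y2 + fderiv ℝ ρ1 u Y1 * fderiv ℝ ρ2 v X2) := by
  intro ψ ρ1 ρ2
  have hf : HasFDerivAt (fun q : E1 × E2 => x q.1)
      ((fderiv ℝ x u).comp (ContinuousLinearMap.fst ℝ E1 E2)) (u, v) :=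
    (hx u).hasFDerivAt.comp (u, v) hasFDerivAt_fst
  have hg : HasFDerivAt (fun q : E1 × E2 => y q.2)
      ((fderiv ℝ y v).comp (ContinuousLinearMap.snd ℝ E1 E2)) (u, v) :=
    (hy v).hasFDerivAt.comp (u, v) hasFDerivAt_snd
  have hψ := (tmulCLM n m).hasFDerivAt_of_bilinear hf hg
  have hψ' : HasFDerivAt ψ _ (u, v) := hψ
  have key : ∀ Z1 Z2, fderiv ℝ ψ (u, v) (Z1, Z2) =
      tmulCLM n m (x u) (fderiv ℝ y v Z2) + tmulCLM n m (fderiv ℝ x u Z1) (y v) := by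
    intro Z1 Z2
    rw [hψ'.fderiv]
    simp [ContinuousLinearMap.precompR, ContinuousLinearMap.precompL]
  rw [key X1 X2, key Y1 Y2]
  simp only [inner_add_left, inner_add_right, inner_tmul]
  have hr1 : ∀ Z, fderiv ℝ ρ1 u Z = (inner ℝ (x u) (fderiv ℝ x u Z) : ℝ) / ‖x u‖ :=
    fun Z => fderiv_norm_eq' hx hxu Z
  have hr2 : ∀ Z, fderiv ℝ ρ2 v Z = (inner ℝ (y v) (fderiv ℝ y v Z) : ℝ) / ‖y v‖ :=
    fun Z => fderiv_norm_eq' hy hyv Z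
  simp only [ρ1, ρ2, hr1, hr2]
  have h1 : ‖x u‖ ≠ 0 := norm_ne_zero_iff.2 hxu
  have h2 : ‖y v‖ ≠ 0 := norm_ne_zero_iff.2 hyv
  have e1 : (inner ℝ (x u) (x u) : ℝ) = ‖x u‖ ^ 2 := real_inner_self_eq_norm_sq _
  have e2 : (inner ℝ (y v) (y v) : ℝ) = ‖y v‖ ^ 2 := real_inner_self_eq_norm_sq _
  rw [e1, e2, real_inner_comm (fderiv ℝ x u X1) (x u), real_inner_comm (fderiv ℝ y v X2) (y v)]
  field_simp
  ring
end

section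
/- Let (N_1,g_1) and (N_2,g_2) be Riemannian manifolds with positive smooth functions f on N_1 and h on N_2. The convolution tensor {}_h g_1 *_f g_2 = h² g_1 + f² g_2 + 2fh df ⊙ dh is a positive-definite symmetric (0,2)-tensor on N_1 × N_2 (i.e., a Riemannian metric) if and only if |grad f|_1 · |grad h|_2 < 1 at every point, where |grad f|_1 is the length of the gradient of f with respect to g_1 and |grad h|_2 the length of the gradient of h with respect to g_2. -/
set_option maxHeartbeats 1000000


/-- (Pointwise form.) The convolution tensor `h² g₁ + f² g₂ + 2fh df ⊙ dh` of two
Riemannian metrics, evaluated at a point (with tangent spaces `T1`, `T2`, values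
`f, h > 0` and differentials `df, dh`), is positive definite if and only if
`|grad f|₁ · |grad h|₂ < 1` there; the gradient lengths are the operator norms of the
differentials. -/
theorem convolution_metric_positive_definite_iff
    {T1 T2 : Type*} [NormedAddCommGroup T1] [InnerProductSpace ℝ T1] [FiniteDimensional ℝ T1]
    [NormedAddCommGroup T2] [InnerProductSpace ℝ T2] [FiniteDimensional ℝ T2]
    (f h : ℝ) (hf : 0 < f) (hh : 0 < h) (df : T1 →L[ℝ] ℝ) (dh : T2 →L[ℝ] ℝ) :
    (∀ X : T1 × T2, X ≠ 0 →
        0 < h ^ 2 * ‖X.1‖ ^ 2 + f ^ 2 * ‖X.2‖ ^ 2 + 2 * f * h * (df X.1 * dh X.2)) ↔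
      ‖df‖ * ‖dh‖ < 1 := by
  constructor
  · intro H
    by_contra hab
    push_neg at hab
    set a := ‖df‖ with ha
    set b := ‖dh‖ with hb
    have ha0 : 0 ≤ a := norm_nonneg _
    have hb0 : 0 ≤ b := norm_nonneg _
    have hbpos : 0 < b := by
      by_contra hb'
      push_neg at hb'
      have : b = 0 := le_antisymm hb' hb0
      nlinarith
    set y : T1 := (InnerProductSpace.toDual ℝ T1).symm df with hy
    set z : T2 := (InnerProductSpace.toDual ℝ T2).symm dh with hz
    have hny : ‖y‖ = a := (InnerProductSpace.toDual ℝ T1).symm.norm_map df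
    have hnz : ‖z‖ = b := (InnerProductSpace.toDual ℝ T2).symm.norm_map dh
    have hdfy : df y = a ^ 2 := by
      have := InnerProductSpace.toDual_symm_apply (𝕜 := ℝ) (E := T1) (x := y) (y := df)
      rw [← hy, real_inner_self_eq_norm_sq, hny] at this
      linarith [this]
    have hdhz : dh z = b ^ 2 := by
      have := InnerProductSpace.toDual_symm_apply (𝕜 := ℝ) (E := T2) (x := z) (y := dh)
      rw [← hz, real_inner_self_eq_norm_sq, hnz] at this
      linarith [this]
    set t : ℝ := f * b ^ 2 / h with ht
    set X : T1 × T2 := (-(t • y), z) with hX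
    have hXne : X ≠ 0 := by
      intro hc
      have : z = 0 := by
        have := congrArg Prod.snd hc
        simpa [hX] using this
      rw [this, norm_zero] at hnz
      exact absurd hnz.symm (ne_of_gt hbpos)
    have hQ := H X hXne
    have h1 : X.1 = -(t • y) := rfl
    have h2 : X.2 = z := rfl
    have hdf1 : df X.1 = -(t * a ^ 2) := by
      rw [h1, map_neg, map_smul, hdfy]; simp
    have hdh2 : dh X.2 = b ^ 2 := by rw [h2, hdhz]
    have hn1 : ‖X.1‖ = |t| * a := by
      rw [h1, norm_neg, norm_smul, hny, Real.norm_eq_abs]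
    have hn2 : ‖X.2‖ = b := by rw [h2, hnz]
    rw [hdf1, hdh2, hn1, hn2] at hQ
    have htpos : 0 ≤ t := by positivity
    rw [abs_of_nonneg htpos] at hQ
    have hth : t * h = f * b ^ 2 := by
      rw [ht, div_mul_cancel₀ _ hh.ne']
    have e1 : h ^ 2 * (t * a) ^ 2 = (f * b ^ 2) ^ 2 * a ^ 2 := by rw [← hth]; ring
    have e2 : 2 * f * h * (-(t * a ^ 2) * b ^ 2) = -(2 * (f * b ^ 2) * f * a ^ 2 * b ^ 2) := by
      rw [← hth]; ring
    rw [e1, e2] at hQ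
    have hge : 1 ≤ (a * b) * (a * b) :=
      le_trans (by norm_num) (mul_le_mul hab hab zero_le_one (by positivity))
    nlinarith [mul_pos (mul_pos hf hf) (mul_pos hbpos hbpos), hge, hQ,
      mul_nonneg (mul_nonneg (le_of_lt hf) (le_of_lt hf)) (mul_nonneg hb0 hb0)]
  · intro hab X hX
    have h1 : |df X.1| ≤ ‖df‖ * ‖X.1‖ := by
      simpa [Real.norm_eq_abs] using df.le_opNorm X.1
    have h2 : |dh X.2| ≤ ‖dh‖ * ‖X.2‖ := by
      simpa [Real.norm_eq_abs] using dh.le_opNorm X.2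
    have hcross : -( ‖df‖ * ‖dh‖ * (‖X.1‖ * ‖X.2‖)) ≤ df X.1 * dh X.2 := by
      have := abs_mul (df X.1) (dh X.2)
      have hle : |df X.1 * dh X.2| ≤ ‖df‖ * ‖dh‖ * (‖X.1‖ * ‖X.2‖) := by
        rw [this]
        have := mul_le_mul h1 h2 (abs_nonneg _) (by positivity)
        nlinarith
      linarith [neg_abs_le (df X.1 * dh X.2)]
    have hne : 0 < ‖X.1‖ ∨ 0 < ‖X.2‖ := by
      by_contra hc
      push_neg at hc
      have e1 : X.1 = 0 := norm_le_zero_iff.mp (hc.1)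
      have e2 : X.2 = 0 := norm_le_zero_iff.mp (hc.2)
      exact hX (Prod.ext e1 e2)
    have hn1 : 0 ≤ ‖X.1‖ := norm_nonneg _
    have hn2 : 0 ≤ ‖X.2‖ := norm_nonneg _
    have hab0 : 0 ≤ ‖df‖ * ‖dh‖ := by positivity
    rcases hne with hp | hq
    · rcases eq_or_lt_of_le hn2 with hz2 | hq
      · have hX2 : X.2 = 0 := norm_le_zero_iff.mp hz2.ge
        rw [hX2] at *
        simp only [map_zero, mul_zero, norm_zero] at *
        nlinarith [mul_pos (pow_pos hh 2) (pow_pos hp 2)]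
      · have key : 2 * f * h * (-(‖df‖ * ‖dh‖ * (‖X.1‖ * ‖X.2‖))) ≤
            2 * f * h * (df X.1 * dh X.2) :=
          mul_le_mul_of_nonneg_left hcross (by positivity)
        have hstrict : 0 < 2 * f * h * ((1 - ‖df‖ * ‖dh‖) * (‖X.1‖ * ‖X.2‖)) :=
          mul_pos (by positivity) (mul_pos (sub_pos.mpr hab) (mul_pos hp hq))
        linarith [sq_nonneg (h * ‖X.1‖ - f * ‖X.2‖), key, hstrict]
    · rcases eq_or_lt_of_le hn1 with hz1 | hp
      · have hX1 : X.1 = 0 := norm_le_zero_iff.mp hz1.ge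
        rw [hX1] at *
        simp only [map_zero, zero_mul, norm_zero] at *
        nlinarith [mul_pos (pow_pos hf 2) (pow_pos hq 2)]
      · have key : 2 * f * h * (-(‖df‖ * ‖dh‖ * (‖X.1‖ * ‖X.2‖))) ≤
            2 * f * h * (df X.1 * dh X.2) :=
          mul_le_mul_of_nonneg_left hcross (by positivity)
        have hstrict : 0 < 2 * f * h * ((1 - ‖df‖ * ‖dh‖) * (‖X.1‖ * ‖X.2‖)) :=
          mul_pos (by positivity) (mul_pos (sub_pos.mpr hab) (mul_pos hp hq))
        linarith [sq_nonneg (h * ‖X.1‖ - f * ‖X.2‖), key, hstrict]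
end

section
/- With notation as above, the convolution tensor {}_h g_1 *_f g_2 = h² g_1 + f² g_2 + 2fh df ⊙ dh is degenerate at every point (i.e., has nontrivial kernel everywhere) if and only if |grad f|_1 is a nonzero constant c on N_1 and |grad h|_2 is the constant 1/c on N_2. -/
lemma pointwise_degenerate_iff
    {T1 T2 : Type*} [NormedAddCommGroup T1] [InnerProductSpace ℝ T1] [FiniteDimensional ℝ T1]
    [NormedAddCommGroup T2] [InnerProductSpace ℝ T2] [FiniteDimensional ℝ T2]
    (F H : ℝ) (hF : 0 < F) (hH : 0 < H)
    (df : T1 →L[ℝ] ℝ) (dh : T2 →L[ℝ] ℝ) :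
    (∃ X : T1 × T2, X ≠ 0 ∧ ∀ Y : T1 × T2,
        H ^ 2 * (inner ℝ X.1 Y.1 : ℝ) + F ^ 2 * (inner ℝ X.2 Y.2 : ℝ)
          + F * H * (df X.1 * dh Y.2 + df Y.1 * dh X.2) = 0) ↔ ‖df‖ * ‖dh‖ = 1 := by
  set u := (InnerProductSpace.toDual ℝ T1).symm df with hu_def
  set v := (InnerProductSpace.toDual ℝ T2).symm dh with hv_def
  have hu : ∀ x, (inner ℝ u x : ℝ) = df x := fun x => InnerProductSpace.toDual_symm_apply
  have hv : ∀ x, (inner ℝ v x : ℝ) = dh x := fun x => InnerProductSpace.toDual_symm_apply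
  have hnu : ‖u‖ = ‖df‖ := LinearIsometryEquiv.norm_map _ _
  have hnv : ‖v‖ = ‖dh‖ := LinearIsometryEquiv.norm_map _ _
  have hdfu : df u = ‖df‖ ^ 2 := by rw [← hu, real_inner_self_eq_norm_sq, hnu]
  have hdhv : dh v = ‖dh‖ ^ 2 := by rw [← hv, real_inner_self_eq_norm_sq, hnv]
  have hF' : F ≠ 0 := hF.ne'
  have hH' : H ≠ 0 := hH.ne'
  constructor
  · rintro ⟨X, hX0, hX⟩
    have h1 : ∀ Y1 : T1, H ^ 2 * (inner ℝ X.1 Y1 : ℝ) + F * H * (df Y1 * dh X.2) = 0 := by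
      intro Y1
      have := hX (Y1, 0)
      simp at this
      linarith
    have h2 : ∀ Y2 : T2, F ^ 2 * (inner ℝ X.2 Y2 : ℝ) + F * H * (df X.1 * dh Y2) = 0 := by
      intro Y2
      have := hX (0, Y2)
      simp at this
      linarith
    have hX1 : (H ^ 2) • X.1 + (F * H * dh X.2) • u = 0 := by
      have hz : ∀ Y1 : T1, (inner ℝ ((H ^ 2) • X.1 + (F * H * dh X.2) • u) Y1 : ℝ) = 0 := by
        intro Y1
        rw [inner_add_left, real_inner_smul_left, real_inner_smul_left, hu]
        have := h1 Y1
        linarith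
      exact inner_self_eq_zero.mp (hz _)
    have hX2 : (F ^ 2) • X.2 + (F * H * df X.1) • v = 0 := by
      have hz : ∀ Y2 : T2, (inner ℝ ((F ^ 2) • X.2 + (F * H * df X.1) • v) Y2 : ℝ) = 0 := by
        intro Y2
        rw [inner_add_left, real_inner_smul_left, real_inner_smul_left, hv]
        have := h2 Y2
        linarith
      exact inner_self_eq_zero.mp (hz _)
    have e1 : H ^ 2 * df X.1 + (F * H * dh X.2) * ‖df‖ ^ 2 = 0 := by
      have := congrArg df hX1
      simp [map_add, map_smul, hdfu] at this
      linarith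
    have e2 : F ^ 2 * dh X.2 + (F * H * df X.1) * ‖dh‖ ^ 2 = 0 := by
      have := congrArg dh hX2
      simp [map_add, map_smul, hdhv] at this
      linarith
    have hdf1 : df X.1 ≠ 0 := by
      intro h0
      have hdh2 : dh X.2 = 0 := by
        have : F ^ 2 * dh X.2 = 0 := by rw [h0] at e2; linarith
        exact by
          have := mul_eq_zero.mp this
          rcases this with h | h
          · exact absurd h (pow_ne_zero 2 hF')
          · exact h
      apply hX0
      have hx1 : X.1 = 0 := by
        have : (H ^ 2) • X.1 = 0 := by
          rw [hdh2] at hX1; simpa using hX1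
        rcases smul_eq_zero.mp this with h | h
        · exact absurd h (pow_ne_zero 2 hH')
        · exact h
      have hx2 : X.2 = 0 := by
        have : (F ^ 2) • X.2 = 0 := by
          rw [h0] at hX2; simpa using hX2
        rcases smul_eq_zero.mp this with h | h
        · exact absurd h (pow_ne_zero 2 hF')
        · exact h
      exact Prod.ext hx1 hx2
    have hdh2 : dh X.2 ≠ 0 := by
      intro h0
      have : H ^ 2 * df X.1 = 0 := by rw [h0] at e1; linarith
      rcases mul_eq_zero.mp this with h | h
      · exact absurd h (pow_ne_zero 2 hH')
      · exact hdf1 h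
    have e1' : H ^ 2 * df X.1 = -(F * H * dh X.2 * ‖df‖ ^ 2) := by linarith
    have e2' : F ^ 2 * dh X.2 = -(F * H * df X.1 * ‖dh‖ ^ 2) := by linarith
    have hmul : (H ^ 2 * df X.1) * (F ^ 2 * dh X.2)
        = (F * H * dh X.2 * ‖df‖ ^ 2) * (F * H * df X.1 * ‖dh‖ ^ 2) := by
      rw [e1', e2']; ring
    have hz : F ^ 2 * H ^ 2 * (df X.1 * dh X.2) * (1 - ‖df‖ ^ 2 * ‖dh‖ ^ 2) = 0 := by
      linear_combination hmul
    have hab : ‖df‖ ^ 2 * ‖dh‖ ^ 2 = 1 := by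
      have h1 : F ^ 2 * H ^ 2 * (df X.1 * dh X.2) ≠ 0 :=
        mul_ne_zero (mul_ne_zero (pow_ne_zero 2 hF') (pow_ne_zero 2 hH'))
          (mul_ne_zero hdf1 hdh2)
      have := (mul_eq_zero.mp hz).resolve_left h1
      linarith
    have hfac : (‖df‖ * ‖dh‖ - 1) * (‖df‖ * ‖dh‖ + 1) = 0 := by linear_combination hab
    rcases mul_eq_zero.mp hfac with h | h
    · linarith
    · nlinarith [norm_nonneg df, norm_nonneg dh]
  · intro hprod
    have hab : ‖u‖ ^ 2 * ‖v‖ ^ 2 = 1 := by rw [hnu, hnv]; nlinarith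
    have hu0 : u ≠ 0 := by
      intro h
      rw [h] at hab; simp at hab
    refine ⟨(F • u, (-(H * ‖u‖ ^ 2)) • v), ?_, ?_⟩
    · intro h
      apply hu0
      have h1 : F • u = 0 := congrArg Prod.fst h
      rcases smul_eq_zero.mp h1 with h | h
      · exact absurd h hF'
      · exact h
    · intro Y
      simp only [real_inner_smul_left, map_smul, smul_eq_mul]
      rw [hdfu, hdhv, ← hu Y.1, ← hv Y.2, ← hnu, ← hnv]
      linear_combination (-(F * H ^ 2) * (inner ℝ u Y.1 : ℝ)) * hab

/-- (Pointwise-family form.) The convolution tensor `h² g₁ + f² g₂ + 2fh df ⊙ dh` on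
`N₁ × N₂` is degenerate at every point (has a nontrivial null vector everywhere) if and
only if `|grad f|₁` is a nonzero constant `c` on `N₁` and `|grad h|₂` is the constant
`1/c` on `N₂`.  Points of `N₁, N₂` are indexed by `P1, P2`, tangent spaces by `T1, T2`,
the function values by `F, H` and the differentials by `df, dh`; gradient lengths are
operator norms. -/
theorem convolution_metric_degenerate_iff
    {P1 P2 : Type*} [Nonempty P1] [Nonempty P2]
    {T1 T2 : Type*} [NormedAddCommGroup T1] [InnerProductSpace ℝ T1] [FiniteDimensional ℝ T1]
    [NormedAddCommGroup T2] [InnerProductSpace ℝ T2] [FiniteDimensional ℝ T2]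
    (F : P1 → ℝ) (H : P2 → ℝ) (hF : ∀ p, 0 < F p) (hH : ∀ q, 0 < H q)
    (df : P1 → T1 →L[ℝ] ℝ) (dh : P2 → T2 →L[ℝ] ℝ) :
    (∀ (p : P1) (q : P2), ∃ X : T1 × T2, X ≠ 0 ∧ ∀ Y : T1 × T2,
        (H q) ^ 2 * (inner ℝ X.1 Y.1 : ℝ) + (F p) ^ 2 * (inner ℝ X.2 Y.2 : ℝ)
          + (F p) * (H q) * (df p X.1 * dh q Y.2 + df p Y.1 * dh q X.2) = 0) ↔
      ∃ c : ℝ, c ≠ 0 ∧ (∀ p, ‖df p‖ = c) ∧ (∀ q, ‖dh q‖ = 1 / c) := by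
  have key : ∀ (p : P1) (q : P2), (∃ X : T1 × T2, X ≠ 0 ∧ ∀ Y : T1 × T2,
        (H q) ^ 2 * (inner ℝ X.1 Y.1 : ℝ) + (F p) ^ 2 * (inner ℝ X.2 Y.2 : ℝ)
          + (F p) * (H q) * (df p X.1 * dh q Y.2 + df p Y.1 * dh q X.2) = 0) ↔
      ‖df p‖ * ‖dh q‖ = 1 := fun p q =>
    pointwise_degenerate_iff (F p) (H q) (hF p) (hH q) (df p) (dh q)
  constructor
  · intro hdeg
    obtain ⟨p0⟩ := ‹Nonempty P1›
    obtain ⟨q0⟩ := ‹Nonempty P2›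
    have h00 : ‖df p0‖ * ‖dh q0‖ = 1 := (key p0 q0).mp (hdeg p0 q0)
    have hc : ‖df p0‖ ≠ 0 := by
      intro h; rw [h] at h00; simp at h00
    have hq0 : ‖dh q0‖ ≠ 0 := by
      intro h; rw [h] at h00; simp at h00
    refine ⟨‖df p0‖, hc, ?_, ?_⟩
    · intro p
      have hp : ‖df p‖ * ‖dh q0‖ = 1 := (key p q0).mp (hdeg p q0)
      have : ‖df p‖ * ‖dh q0‖ = ‖df p0‖ * ‖dh q0‖ := hp.trans h00.symm
      exact mul_right_cancel₀ hq0 this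
    · intro q
      have hq : ‖df p0‖ * ‖dh q‖ = 1 := (key p0 q).mp (hdeg p0 q)
      field_simp
      linarith
  · rintro ⟨c, hc, h1, h2⟩ p q
    refine (key p q).mpr ?_
    rw [h1, h2]
    field_simp
end

section
/- Let x: (N_1,g_1) → ℝ^n\{0} be an isometric immersion and y: (N_2,g_2) → S^{m-1}(1) ⊂ ℝ^m an isometric immersion into the unit sphere centered at the origin. Then the convolution metric induced by the map (u,v) ↦ x(u) ⊗ y(v) on N_1 × N_2 equals the warped product metric g_1 + |x|² g_2. -/
/-- If `x : N₁ → ℝⁿ \ {0}` is an isometric immersion and `y : N₂ → S^{m-1}(1) ⊂ ℝᵐ`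
is an isometric immersion into the unit sphere, then the convolution metric induced by
`(u,v) ↦ x(u) ⊗ y(v)` equals the warped product metric `g₁ + |x|² g₂` (expressed here in
local coordinates, the metrics `g₁, g₂` being the pullbacks of the Euclidean metrics). -/
theorem tensor_with_spherical_factor_is_warped_product (n m : ℕ)
    {E1 E2 : Type*} [NormedAddCommGroup E1] [NormedSpace ℝ E1]
    [NormedAddCommGroup E2] [NormedSpace ℝ E2]
    (x : E1 → EuclideanSpace ℝ (Fin n)) (y : E2 → EuclideanSpace ℝ (Fin m))
    (hx : Differentiable ℝ x) (hy : Differentiable ℝ y)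
    (hx0 : ∀ u, x u ≠ 0) (hy1 : ∀ v, ‖y v‖ = 1)
    (u : E1) (v : E2) (X1 Y1 : E1) (X2 Y2 : E2) :
    let ψ : E1 × E2 → EuclideanSpace ℝ (Fin n × Fin m) :=
      fun q => WithLp.toLp 2 (fun jα : Fin n × Fin m => x q.1 jα.1 * y q.2 jα.2)
    (inner ℝ (fderiv ℝ ψ (u, v) (X1, X2)) (fderiv ℝ ψ (u, v) (Y1, Y2)) : ℝ) =
      (inner ℝ (fderiv ℝ x u X1) (fderiv ℝ x u Y1) : ℝ)
        + ‖x u‖ ^ 2 * (inner ℝ (fderiv ℝ y v X2) (fderiv ℝ y v Y2) : ℝ) := by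
  intro ψ
  have hxA : HasFDerivAt x (fderiv ℝ x u) u := (hx u).hasFDerivAt
  have hyB : HasFDerivAt y (fderiv ℝ y v) v := (hy v).hasFDerivAt
  set A := fderiv ℝ x u with hA
  set B := fderiv ℝ y v with hB
  -- the componentwise derivative
  set D : Fin n × Fin m → (E1 × E2) →L[ℝ] ℝ := fun jα =>
    (x u jα.1) • ((PiLp.proj 2 _ jα.2 ∘L B) ∘L ContinuousLinearMap.snd ℝ E1 E2)
      + (y v jα.2) • ((PiLp.proj 2 _ jα.1 ∘L A) ∘L ContinuousLinearMap.fst ℝ E1 E2) with hDdef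
  have hD : ∀ jα : Fin n × Fin m,
      HasFDerivAt (fun q : E1 × E2 => x q.1 jα.1 * y q.2 jα.2) (D jα) (u, v) := by
    intro jα
    have h1 : HasFDerivAt (fun q : E1 × E2 => x q.1 jα.1)
        ((PiLp.proj 2 _ jα.1 ∘L A) ∘L ContinuousLinearMap.fst ℝ E1 E2) (u, v) := by
      have := ((PiLp.hasFDerivAt_apply (𝕜 := ℝ) 2 (x u) jα.1).comp u hxA)
      exact this.comp (u, v) (hasFDerivAt_fst (𝕜 := ℝ) (E := E1) (F := E2) (p := (u, v)))
    have h2 : HasFDerivAt (fun q : E1 × E2 => y q.2 jα.2)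
        ((PiLp.proj 2 _ jα.2 ∘L B) ∘L ContinuousLinearMap.snd ℝ E1 E2) (u, v) := by
      have := ((PiLp.hasFDerivAt_apply (𝕜 := ℝ) 2 (y v) jα.2).comp v hyB)
      exact this.comp (u, v) (hasFDerivAt_snd (𝕜 := ℝ) (E := E1) (F := E2) (p := (u, v)))
    exact h1.mul h2
  -- derivative of the full map
  have hψ : HasFDerivAt ψ
      (((PiLp.continuousLinearEquiv 2 ℝ (fun _ : Fin n × Fin m => ℝ)).symm :
          ((Fin n × Fin m) → ℝ) →L[ℝ] EuclideanSpace ℝ (Fin n × Fin m)) ∘L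
        ContinuousLinearMap.pi D) (u, v) := by
    have hpi : HasFDerivAt (fun q : E1 × E2 => fun jα : Fin n × Fin m => x q.1 jα.1 * y q.2 jα.2)
        (ContinuousLinearMap.pi D) (u, v) := hasFDerivAt_pi.mpr hD
    exact (PiLp.hasFDerivAt_toLp 2 _).comp (u, v) hpi
  have hval : ∀ (W : E1 × E2) (jα : Fin n × Fin m),
      fderiv ℝ ψ (u, v) W jα = x u jα.1 * B W.2 jα.2 + y v jα.2 * A W.1 jα.1 := by
    intro W jα
    rw [hψ.fderiv]
    simp [hDdef, smul_eq_mul]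
  -- orthogonality of y and its derivative
  have horth : ∀ W : E2, (inner ℝ (y v) (B W) : ℝ) = 0 := by
    intro W
    have h1 : HasFDerivAt (fun w => (inner ℝ (y w) (y w) : ℝ))
        ((fderivInnerCLM ℝ (y v, y v)).comp (B.prod B)) v := hyB.inner ℝ hyB
    have h2 : (fun w => (inner ℝ (y w) (y w) : ℝ)) = fun _ => (1 : ℝ) := by
      funext w
      rw [real_inner_self_eq_norm_sq, hy1 w]; norm_num
    rw [h2] at h1
    have h3 := h1.unique (hasFDerivAt_const 1 v)
    have happ := congrArg (fun L : E2 →L[ℝ] ℝ => L W) h3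
    simp only [ContinuousLinearMap.comp_apply, ContinuousLinearMap.prod_apply,
      fderivInnerCLM_apply, ContinuousLinearMap.zero_apply] at happ
    have := real_inner_comm (y v) (B W)
    linarith [happ]
  have horth' : ∀ W : E2, ∑ α : Fin m, y v α * B W α = 0 := by
    intro W
    have := horth W
    rw [PiLp.inner_apply] at this
    simpa [RCLike.inner_apply, mul_comm] using this
  have hq2 : ∑ α : Fin m, y v α * y v α = 1 := by
    have : (inner ℝ (y v) (y v) : ℝ) = 1 := by
      rw [real_inner_self_eq_norm_sq, hy1 v]; norm_num
    rw [PiLp.inner_apply] at this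
    simpa [RCLike.inner_apply, ← sq] using this
  have hp2 : ∑ j : Fin n, x u j * x u j = ‖x u‖ ^ 2 := by
    have : (inner ℝ (x u) (x u) : ℝ) = ‖x u‖ ^ 2 := real_inner_self_eq_norm_sq (x u)
    rw [PiLp.inner_apply] at this
    simpa [RCLike.inner_apply, ← sq] using this
  -- expand inner products as sums
  rw [PiLp.inner_apply, PiLp.inner_apply, PiLp.inner_apply]
  simp only [RCLike.inner_apply, conj_trivial, hval]
  rw [Fintype.sum_prod_type]
  conv_lhs => enter [2, j, 2, α]; rw [mul_comm]
  conv_rhs => enter [1, 2, j]; rw [mul_comm]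
  conv_rhs => enter [2, 2, 2, α]; rw [mul_comm]
  have hS : ∀ α : Fin m, B Y2 α * y v α = y v α * B Y2 α := fun α => mul_comm _ _
  have inner_j : ∀ j : Fin n,
      (∑ α : Fin m, (x u j * B X2 (j, α).2 + y v (j, α).2 * A X1 (j, α).1)
          * (x u j * B Y2 (j, α).2 + y v (j, α).2 * A Y1 (j, α).1))
        = x u j * x u j * ∑ α : Fin m, B X2 α * B Y2 α + A X1 j * A Y1 j := by
    intro j
    have expand : ∀ α : Fin m,
        (x u j * B X2 α + y v α * A X1 j) * (x u j * B Y2 α + y v α * A Y1 j)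
          = x u j * x u j * (B X2 α * B Y2 α) + (x u j * A Y1 j) * (y v α * B X2 α)
            + (A X1 j * x u j) * (y v α * B Y2 α) + (A X1 j * A Y1 j) * (y v α * y v α) := by
      intro α; ring
    simp only [expand]
    rw [Finset.sum_add_distrib, Finset.sum_add_distrib, Finset.sum_add_distrib,
      ← Finset.mul_sum, ← Finset.mul_sum, ← Finset.mul_sum, ← Finset.mul_sum,
      horth' X2, horth' Y2, hq2]
    ring
  simp only [inner_j]
  rw [Finset.sum_add_distrib, ← Finset.sum_mul, hp2]
  ring
end

section
/- Conversely, if z: I → S³(c) ⊂ ℂ² is a unit speed Legendre curve (⟨z',iz⟩ = 0 identically, ⟨z',z'⟩ = 1, ⟨z,z⟩ = 1/c), then there exists a real-valued function λ on I such that z''(t) − iλ(t) z'(t) + c z(t) = 0. -/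
lemma aux_orth_zero (x y u : EuclideanSpace ℂ (Fin 2)) (hx : x ≠ 0) (hy : y ≠ 0)
    (hxy : (inner ℂ x y : ℂ) = 0) (hxu : (inner ℂ x u : ℂ) = 0) (hyu : (inner ℂ y u : ℂ) = 0) :
    u = 0 := by
  have hxx : (inner ℂ x x : ℂ) ≠ 0 := fun h => hx (inner_self_eq_zero.1 h)
  have hyy : (inner ℂ y y : ℂ) ≠ 0 := fun h => hy (inner_self_eq_zero.1 h)
  have hyx : (inner ℂ y x : ℂ) = 0 := by
    rw [← inner_conj_symm] at hxy
    simpa using congrArg (starRingEnd ℂ) hxy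
  have hind : LinearIndependent ℂ ![x, y] := by
    rw [LinearIndependent.pair_iff]
    intro s t hst
    have h1 : (inner ℂ x (s • x + t • y) : ℂ) = 0 := by rw [hst, inner_zero_right]
    have h2 : (inner ℂ y (s • x + t • y) : ℂ) = 0 := by rw [hst, inner_zero_right]
    rw [inner_add_right, inner_smul_right, inner_smul_right, hxy, mul_zero, add_zero] at h1
    rw [inner_add_right, inner_smul_right, inner_smul_right, hyx, mul_zero, zero_add] at h2
    exact ⟨(mul_eq_zero.1 h1).resolve_right hxx, (mul_eq_zero.1 h2).resolve_right hyy⟩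
  have hspan : Submodule.span ℂ (Set.range ![x, y]) = ⊤ :=
    hind.span_eq_top_of_card_eq_finrank (by simp [finrank_euclideanSpace_fin])
  have hrange : Set.range ![x, y] = {x, y} := by
    ext v; simp [Fin.exists_fin_two]; tauto
  have hmem : u ∈ Submodule.span ℂ ({x, y} : Set (EuclideanSpace ℂ (Fin 2))) := by
    rw [← hrange, hspan]; trivial
  have hux : (inner ℂ u x : ℂ) = 0 := by
    rw [← inner_conj_symm, hxu]; simp
  have huy : (inner ℂ u y : ℂ) = 0 := by
    rw [← inner_conj_symm, hyu]; simp
  have key : ∀ v ∈ Submodule.span ℂ ({x, y} : Set (EuclideanSpace ℂ (Fin 2))),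
      (inner ℂ u v : ℂ) = 0 := by
    intro v hv
    induction hv using Submodule.span_induction with
    | mem w hw => rcases hw with rfl | rfl
                  · exact hux
                  · exact huy
    | zero => simp
    | add a b ha hb iha ihb => rw [inner_add_right, iha, ihb, add_zero]
    | smul a w hw ih => rw [inner_smul_right, ih, mul_zero]
  exact inner_self_eq_zero.1 (key u hmem)

/-- Conversely, a unit speed Legendre curve `z : I → S³(c) ⊂ ℂ²` satisfies the
differential equation `z'' - iλ z' + c z = 0` for some real-valued function `λ` on `I`. -/
theorem legendre_implies_ode (c : ℝ) (hc : 0 < c) (I : Set ℝ) (hI : IsOpen I)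
    (z zp zpp : ℝ → EuclideanSpace ℂ (Fin 2))
    (hz : ∀ t ∈ I, HasDerivAt z (zp t) t)
    (hzp : ∀ t ∈ I, HasDerivAt zp (zpp t) t)
    (hsphere : ∀ t ∈ I, ((inner ℂ (z t) (z t) : ℂ)).re = 1 / c)
    (hunit : ∀ t ∈ I, ((inner ℂ (zp t) (zp t) : ℂ)).re = 1)
    (hLegendre : ∀ t ∈ I, ((inner ℂ (zp t) (Complex.I • z t) : ℂ)).re = 0) :
    ∃ lam : ℝ → ℝ, ∀ t ∈ I,
      zpp t - (((lam t : ℂ)) * Complex.I) • zp t + (c : ℂ) • z t = 0 := by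
  -- the curve is Hermitian-orthogonal to its velocity
  have horth : ∀ s ∈ I, (inner ℂ (zp s) (z s) : ℂ) = 0 := by
    intro s hs
    have h1 : HasDerivAt (fun r => ((inner ℂ (z r) (z r) : ℂ)).re)
        ((inner ℂ (z s) (zp s) + inner ℂ (zp s) (z s) : ℂ)).re s :=
      Complex.reCLM.hasFDerivAt.comp_hasDerivAt s ((hz s hs).inner ℂ (hz s hs))
    have hconst : HasDerivAt (fun r => ((inner ℂ (z r) (z r) : ℂ)).re) 0 s :=
      (hasDerivAt_const s (1/c)).congr_of_eventuallyEq
        (Filter.eventually_of_mem (hI.mem_nhds hs) fun r hr => hsphere r hr)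
    have h0 := h1.unique hconst
    have hcs : (inner ℂ (z s) (zp s) : ℂ) = (starRingEnd ℂ) (inner ℂ (zp s) (z s) : ℂ) :=
      (inner_conj_symm _ _).symm
    rw [hcs] at h0
    have hre : ((inner ℂ (zp s) (z s) : ℂ)).re = 0 := by
      simp only [Complex.add_re, Complex.conj_re] at h0
      linarith
    have him : ((inner ℂ (zp s) (z s) : ℂ)).im = 0 := by
      have hL := hLegendre s hs
      rw [inner_smul_right, Complex.mul_re, Complex.I_re, Complex.I_im] at hL
      linarith [hL]
    exact Complex.ext hre him
  have hone : ∀ s ∈ I, (inner ℂ (zp s) (zp s) : ℂ) = 1 := by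
    intro s hs
    refine Complex.ext (by simpa using hunit s hs) ?_
    simpa using inner_self_im (𝕜 := ℂ) (zp s)
  refine ⟨fun t => ((inner ℂ (zp t) (zpp t) : ℂ)).im, fun t ht => ?_⟩
  have hmemI : I ∈ nhds t := hI.mem_nhds ht
  -- ⟪z'', z⟫ = -1
  have hC : (inner ℂ (zpp t) (z t) : ℂ) = -1 := by
    have hGd : HasDerivAt (fun r => (inner ℂ (zp r) (z r) : ℂ))
        (inner ℂ (zp t) (zp t) + inner ℂ (zpp t) (z t)) t := (hzp t ht).inner ℂ (hz t ht)
    have hG0 : HasDerivAt (fun r => (inner ℂ (zp r) (z r) : ℂ)) 0 t :=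
      (hasDerivAt_const t (0:ℂ)).congr_of_eventuallyEq
        (Filter.eventually_of_mem hmemI fun r hr => horth r hr)
    have h := hGd.unique hG0
    rw [hone t ht] at h
    linear_combination h
  -- ⟪z', z''⟫ is purely imaginary
  have hD : ((inner ℂ (zp t) (zpp t) : ℂ)).re = 0 := by
    have hHd : HasDerivAt (fun r => (inner ℂ (zp r) (zp r) : ℂ))
        (inner ℂ (zp t) (zpp t) + inner ℂ (zpp t) (zp t)) t := (hzp t ht).inner ℂ (hzp t ht)
    have hH0 : HasDerivAt (fun r => (inner ℂ (zp r) (zp r) : ℂ)) 0 t :=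
      (hasDerivAt_const t (1:ℂ)).congr_of_eventuallyEq
        (Filter.eventually_of_mem hmemI fun r hr => hone r hr)
    have h := hHd.unique hH0
    rw [← inner_conj_symm (zpp t) (zp t)] at h
    have h' := congrArg Complex.re h
    simp only [Complex.add_re, Complex.conj_re, Complex.zero_re] at h'
    linarith
  have hE : (inner ℂ (zp t) (zpp t) : ℂ)
      = ((((inner ℂ (zp t) (zpp t) : ℂ)).im : ℂ)) * Complex.I := by
    have h1 : ∀ w : ℂ, w.re = 0 → w = (w.im : ℂ) * Complex.I := by
      intro w hw; apply Complex.ext <;> simp [hw]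
    exact h1 _ hD
  have hz0 : z t ≠ 0 := by
    intro h
    have := hsphere t ht
    rw [h] at this
    simp at this
    exact absurd this.symm (by positivity)
  have hzp0 : zp t ≠ 0 := by
    intro h
    have := hunit t ht
    rw [h] at this
    simp at this
  have hxy : (inner ℂ (z t) (zp t) : ℂ) = 0 := by
    rw [← inner_conj_symm, horth t ht]; simp
  have hzz : (inner ℂ (z t) (z t) : ℂ) = ((1/c : ℝ) : ℂ) := by
    refine Complex.ext ?_ ?_
    · simpa using hsphere t ht
    · simpa using inner_self_im (𝕜 := ℂ) (z t)
  have hzpp : (inner ℂ (z t) (zpp t) : ℂ) = -1 := by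
    rw [← inner_conj_symm, hC]; simp
  set lam : ℂ := (((inner ℂ (zp t) (zpp t) : ℂ)).im : ℂ) with hlam
  refine aux_orth_zero (z t) (zp t) _ hz0 hzp0 hxy ?_ ?_
  · rw [inner_add_right, inner_sub_right, inner_smul_right, inner_smul_right,
      hzpp, hxy, hzz]
    have hcne : (c : ℂ) ≠ 0 := by exact_mod_cast hc.ne'
    rw [Complex.ofReal_div, Complex.ofReal_one, mul_zero, sub_zero, mul_one_div_cancel hcne]
    ring
  · rw [inner_add_right, inner_sub_right, inner_smul_right, inner_smul_right,
      hone t ht, horth t ht, ← hE]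
    ring
end

section
/- The Whitney map w: S^n → ℂ^n defined by w(y_0, y_1, ..., y_n) = ((1 + i y_0)/(1 + y_0²)) · (y_1, ..., y_n), for (y_0,...,y_n) ∈ ℝ^{n+1} with y_0² + y_1² + ⋯ + y_n² = 1, is an immersion of the unit n-sphere into ℂ^n, and it is Lagrangian: for every point p ∈ S^n and all tangent vectors X, Y ∈ T_p S^n, the Kähler form ω(dw(X), dw(Y)) = 0, where ω(u,v) = ⟨iu, v⟩ on ℂ^n. -/
open ContinuousLinearMap

/-- The Whitney map `w : Sⁿ → ℂⁿ`, `w(y₀, y) = ((1 + i y₀)/(1 + y₀²)) · y`, is an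
immersion of the unit sphere `y₀² + |y|² = 1` into `ℂⁿ` (its differential is injective on
each tangent space of the sphere), and it is Lagrangian: the Kähler form
`ω(u, v) = Re⟨i u, v⟩` vanishes on the image of each tangent space. -/
theorem whitney_sphere_lagrangian_immersion (n : ℕ)
    (p : ℝ × EuclideanSpace ℝ (Fin n)) (hp : p.1 ^ 2 + ‖p.2‖ ^ 2 = 1) :
    let W : ℝ × EuclideanSpace ℝ (Fin n) → EuclideanSpace ℂ (Fin n) :=
      fun q => WithLp.toLp 2 (fun j => ((1 + (q.1 : ℂ) * Complex.I) / (1 + (q.1 : ℂ) ^ 2)) * (q.2 j : ℂ))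
    (∀ X : ℝ × EuclideanSpace ℝ (Fin n),
        p.1 * X.1 + (inner ℝ p.2 X.2 : ℝ) = 0 → fderiv ℝ W p X = 0 → X = 0) ∧
    (∀ X Y : ℝ × EuclideanSpace ℝ (Fin n),
        p.1 * X.1 + (inner ℝ p.2 X.2 : ℝ) = 0 → p.1 * Y.1 + (inner ℝ p.2 Y.2 : ℝ) = 0 →
        ((inner ℂ (Complex.I • fderiv ℝ W p X) (fderiv ℝ W p Y) : ℂ)).re = 0) := by
  intro W
  set a : ℝ := p.1 with ha
  set A : ℂ := (Complex.I * (1 + (a:ℂ)^2) - (1 + (a:ℂ)*Complex.I) * (2*(a:ℂ))) / ((1 + (a:ℂ)^2)^2) with hA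
  set B : ℂ := (1 + (a:ℂ)*Complex.I) / (1 + (a:ℂ)^2) with hB
  have hdne : (1 + (a:ℂ)^2) ≠ 0 := by
    have : ((1 + a^2 : ℝ) : ℂ) ≠ 0 := by
      simp only [ne_eq, Complex.ofReal_eq_zero]
      positivity
    simpa using this
  -- derivative of F t = (1+t i)/(1+t²)
  have hF : HasDerivAt (fun t : ℝ => (1 + (t:ℂ) * Complex.I) / (1 + (t:ℂ) ^ 2)) A a := by
    have h1 : HasDerivAt (fun z : ℂ => 1 + z * Complex.I) Complex.I (a : ℂ) := by
      simpa using ((hasDerivAt_id ((a:ℝ):ℂ)).mul_const Complex.I).const_add 1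
    have h2 : HasDerivAt (fun z : ℂ => 1 + z ^ 2) (2 * (a:ℂ)) (a : ℂ) := by
      simpa using ((hasDerivAt_pow 2 ((a:ℝ):ℂ)).const_add 1)
    exact (h1.comp_ofReal.div h2.comp_ofReal hdne)
  -- the fderiv of W
  set C : (ℝ × EuclideanSpace ℝ (Fin n)) →L[ℝ] ℂ :=
    ((1 : ℝ →L[ℝ] ℝ).smulRight A).comp (fst ℝ ℝ (EuclideanSpace ℝ (Fin n))) with hC
  set M : Fin n → (ℝ × EuclideanSpace ℝ (Fin n)) →L[ℝ] ℂ := fun j =>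
    Complex.ofRealCLM.comp ((EuclideanSpace.proj j).comp
      (snd ℝ ℝ (EuclideanSpace ℝ (Fin n)))) with hM
  set L : (ℝ × EuclideanSpace ℝ (Fin n)) →L[ℝ] EuclideanSpace ℂ (Fin n) :=
    ((PiLp.continuousLinearEquiv 2 ℝ (fun _ : Fin n => ℂ)).symm.toContinuousLinearMap).comp
      (ContinuousLinearMap.pi (fun j : Fin n => (B • (M j) + ((p.2 j : ℝ) : ℂ) • C : (ℝ × EuclideanSpace ℝ (Fin n)) →L[ℝ] ℂ))) with hL
  have hW : HasFDerivAt W L p := by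
    have hpi : HasFDerivAt
        (fun q : ℝ × EuclideanSpace ℝ (Fin n) => fun j : Fin n =>
          ((1 + (q.1 : ℂ) * Complex.I) / (1 + (q.1 : ℂ) ^ 2)) * (q.2 j : ℂ))
        (ContinuousLinearMap.pi (fun j : Fin n => (B • (M j) + ((p.2 j : ℝ) : ℂ) • C : (ℝ × EuclideanSpace ℝ (Fin n)) →L[ℝ] ℂ))) p := by
      apply hasFDerivAt_pi.2
      intro j
      have hc : HasFDerivAt
          (fun q : ℝ × EuclideanSpace ℝ (Fin n) => (1 + (q.1 : ℂ) * Complex.I) / (1 + (q.1 : ℂ) ^ 2))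
          C p :=
        by
          have h := hF.hasFDerivAt.comp p (hasFDerivAt_fst (𝕜 := ℝ) (E := ℝ) (F := EuclideanSpace ℝ (Fin n)) (p := p))
          exact h
      have hd : HasFDerivAt
          (fun q : ℝ × EuclideanSpace ℝ (Fin n) => ((q.2 j : ℝ) : ℂ)) (M j) p :=
        (M j).hasFDerivAt
      exact hc.mul hd
    exact ((PiLp.continuousLinearEquiv 2 ℝ
      (fun _ : Fin n => ℂ)).symm.toContinuousLinearMap.hasFDerivAt).comp p hpi
  have key : ∀ X : ℝ × EuclideanSpace ℝ (Fin n), ∀ j : Fin n,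
      fderiv ℝ W p X j = A * (X.1 : ℂ) * ((p.2 j : ℝ) : ℂ) + B * ((X.2 j : ℝ) : ℂ) := by
    intro X j
    rw [hW.fderiv]
    simp [hL, hM, hC, ContinuousLinearMap.pi_apply, smul_eq_mul]
    ring
  -- inner product of real Euclidean space as a sum
  have hinner : ∀ v w : EuclideanSpace ℝ (Fin n),
      (inner ℝ v w : ℝ) = ∑ j, v j * w j := by
    intro v w
    simp [PiLp.inner_apply, RCLike.inner_apply, mul_comm]
  constructor
  · -- immersion
    intro X htan hXzero
    have hcomp : ∀ j : Fin n, A * (X.1:ℂ) * ((p.2 j : ℝ):ℂ) + B * ((X.2 j : ℝ):ℂ) = 0 := by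
      intro j
      rw [← key X j, hXzero]
      rfl
    have hAclean : A * (1 + (a:ℂ)^2)^2
        = Complex.I * (1 + (a:ℂ)^2) - (1 + (a:ℂ)*Complex.I) * (2*(a:ℂ)) := by
      rw [hA]; exact div_mul_cancel₀ _ (pow_ne_zero 2 hdne)
    have hBclean : B * (1 + (a:ℂ)^2) = 1 + (a:ℂ)*Complex.I := by
      rw [hB]; exact div_mul_cancel₀ _ hdne
    have hru : ∀ j : Fin n, X.1 * p.2 j = 0 ∧ X.2 j = 0 := by
      intro j
      have hj := hcomp j
      have hj2 : (Complex.I * (1 + (a:ℂ)^2) - (1 + (a:ℂ)*Complex.I) * (2*(a:ℂ)))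
            * (X.1:ℂ) * ((p.2 j : ℝ):ℂ)
          + (1 + (a:ℂ)*Complex.I) * (1 + (a:ℂ)^2) * ((X.2 j : ℝ):ℂ) = 0 := by
        linear_combination ((1 + (a:ℂ)^2)^2) * hj
          - ((X.1:ℂ) * ((p.2 j : ℝ):ℂ)) * hAclean
          - ((1 + (a:ℂ)^2) * ((X.2 j : ℝ):ℂ)) * hBclean
      have hj3 : ((-2*a*(X.1 * p.2 j) + (1+a^2)*(X.2 j) : ℝ) : ℂ)
          + (((1-a^2)*(X.1 * p.2 j) + (1+a^2)*a*(X.2 j) : ℝ):ℂ) * Complex.I = 0 := by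
        push_cast
        linear_combination hj2
      have h1 : -2*a*(X.1 * p.2 j) + (1+a^2)*(X.2 j) = 0 := by
        have := congrArg Complex.re hj3
        simp only [Complex.add_re, Complex.mul_re, Complex.I_re, Complex.I_im,
          Complex.ofReal_re, Complex.ofReal_im, Complex.zero_re, mul_zero, mul_one,
          zero_mul, sub_zero, add_zero, zero_add] at this
        linarith [this]
      have h2 : (1-a^2)*(X.1 * p.2 j) + (1+a^2)*a*(X.2 j) = 0 := by
        have := congrArg Complex.im hj3
        simp only [Complex.add_im, Complex.mul_im, Complex.I_re, Complex.I_im,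
          Complex.ofReal_re, Complex.ofReal_im, Complex.zero_im, mul_zero, mul_one,
          zero_mul, sub_zero, add_zero, zero_add] at this
        linarith [this]
      have hu : X.1 * p.2 j = 0 := by
        have h3 : (1 + a^2) * (X.1 * p.2 j) = 0 := by linear_combination h2 - a * h1
        exact (mul_eq_zero.1 h3).resolve_left (by positivity)
      have hv : X.2 j = 0 := by
        have h4 : (1 + a^2) * (X.2 j) = 0 := by linear_combination h1 + 2*a*hu
        exact (mul_eq_zero.1 h4).resolve_left (by positivity)
      exact ⟨hu, hv⟩
    have hX2 : X.2 = 0 := by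
      ext j
      exact (hru j).2
    have hX1 : X.1 = 0 := by
      by_contra h
      have hp2 : p.2 = 0 := by
        ext j
        have := (hru j).1
        rcases mul_eq_zero.1 this with h' | h'
        · exact absurd h' h
        · exact h'
      have hnorm : ‖p.2‖ = 0 := by rw [hp2]; simp
      have ha1 : a^2 = 1 := by rw [← hp]; rw [hnorm]; ring
      have htan' : a * X.1 = 0 := by
        have : (inner ℝ p.2 X.2 : ℝ) = 0 := by rw [hX2]; simp
        rw [this] at htan
        linarith [htan]
      have ha0 : a = 0 := by
        rcases mul_eq_zero.1 htan' with h' | h'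
        · exact h'
        · exact absurd h' h
      rw [ha0] at ha1
      norm_num at ha1
    have : X = (X.1, X.2) := rfl
    rw [this, hX1, hX2]
    rfl
  · -- Lagrangian
    intro X Y hXt hYt
    have hPX : (∑ j, p.2 j * X.2 j) = -(a * X.1) := by
      have := hinner p.2 X.2
      rw [this] at hXt
      linarith [hXt]
    have hPY : (∑ j, p.2 j * Y.2 j) = -(a * Y.1) := by
      have := hinner p.2 Y.2
      rw [this] at hYt
      linarith [hYt]
    set c : ℝ := ((starRingEnd ℂ) A * B).im with hc
    have hterm : ∀ j : Fin n,
        ((starRingEnd ℂ) (Complex.I • fderiv ℝ W p X j) * fderiv ℝ W p Y j).re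
          = c * (X.1 * (p.2 j * Y.2 j) - Y.1 * (p.2 j * X.2 j)) := by
      intro j
      rw [key X j, key Y j, hc]
      simp only [smul_eq_mul, map_mul, Complex.conj_I, map_add, Complex.conj_ofReal,
        Complex.mul_re, Complex.mul_im, Complex.add_re, Complex.add_im, Complex.I_re,
        Complex.I_im, Complex.neg_re, Complex.neg_im, Complex.ofReal_re, Complex.ofReal_im,
        Complex.conj_re, Complex.conj_im]
      ring
    have hsum : ((inner ℂ (Complex.I • fderiv ℝ W p X) (fderiv ℝ W p Y) : ℂ)).re
        = ∑ j, ((starRingEnd ℂ) (Complex.I • fderiv ℝ W p X j) * fderiv ℝ W p Y j).re := by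
      rw [PiLp.inner_apply]
      rw [Complex.re_sum]
      apply Finset.sum_congr rfl
      intro j _
      simp [RCLike.inner_apply, PiLp.smul_apply]
      ring
    rw [hsum]
    calc (∑ j, ((starRingEnd ℂ) (Complex.I • fderiv ℝ W p X j) * fderiv ℝ W p Y j).re)
        = ∑ j, c * (X.1 * (p.2 j * Y.2 j) - Y.1 * (p.2 j * X.2 j)) :=
          Finset.sum_congr rfl (fun j _ => hterm j)
      _ = c * X.1 * (∑ j, p.2 j * Y.2 j) - c * Y.1 * (∑ j, p.2 j * X.2 j) := by
          rw [Finset.mul_sum, Finset.mul_sum, ← Finset.sum_sub_distrib]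
          exact Finset.sum_congr rfl (fun j _ => by ring)
      _ = 0 := by rw [hPX, hPY]; ring
end

section
/- Let z: I → ℂ\{0} be a unit speed curve and x: M^{n−1} → S^{m−1}(1) ⊂ ℝ^m a spherical isometric immersion of a Riemannian (n−1)-manifold. Then the complex extensor τ: I × M^{n−1} → ℂ^m, τ(s,u) = z(s)·x(u) = (z(s)x_1(u), ..., z(s)x_m(u)), is a totally real immersion: for all tangent vectors X, Y to I × M^{n−1}, the Kähler form of ℂ^m vanishes on (dτ(X), dτ(Y)). -/
/-- Coordinatewise coercion `ℝᵐ → ℂᵐ` as a continuous linear map. -/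
noncomputable def realToComplexCLM (m : ℕ) :
    EuclideanSpace ℝ (Fin m) →L[ℝ] EuclideanSpace ℂ (Fin m) :=
  LinearMap.toContinuousLinearMap
    { toFun := fun a => WithLp.toLp 2 (fun j => (a j : ℂ))
      map_add' := by intro a b; ext j; simp [PiLp.add_apply]
      map_smul' := by
        intro r a; ext j
        simp [PiLp.smul_apply, Complex.ofReal_mul, Complex.real_smul] }

lemma realToComplexCLM_apply (m : ℕ) (a : EuclideanSpace ℝ (Fin m)) (j : Fin m) :
    realToComplexCLM m a j = (a j : ℂ) := rfl

lemma inner_realToComplexCLM (m : ℕ) (a b : EuclideanSpace ℝ (Fin m)) :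
    (inner ℂ (realToComplexCLM m a) (realToComplexCLM m b) : ℂ)
      = ((inner ℝ a b : ℝ) : ℂ) := by
  simp only [PiLp.inner_apply, realToComplexCLM_apply, RCLike.inner_apply,
    conj_trivial, Complex.conj_ofReal]
  push_cast
  rfl

/-- Let `z : ℝ → ℂ \ {0}` be a unit speed curve and `x : M^{n-1} → S^{m-1}(1) ⊂ ℝᵐ` a
spherical isometric immersion (expressed in local coordinates on a chart `E` of the
Riemannian `(n-1)`-manifold `M^{n-1}`).  Then the complex extensor
`τ(s,u) = z(s)·x(u)` is totally real: the Kähler form `ω(u,v) = Re⟨i u, v⟩` of `ℂᵐ`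
vanishes on the image of each tangent space. -/
theorem complex_extensor_totally_real (m : ℕ)
    {E : Type*} [NormedAddCommGroup E] [NormedSpace ℝ E]
    (z : ℝ → ℂ) (x : E → EuclideanSpace ℝ (Fin m))
    (hz : Differentiable ℝ z) (hz0 : ∀ s, z s ≠ 0) (hunit : ∀ s, ‖deriv z s‖ = 1)
    (hx : Differentiable ℝ x) (hxs : ∀ u, ‖x u‖ = 1) :
    let τ : ℝ × E → EuclideanSpace ℂ (Fin m) :=
      fun q => WithLp.toLp 2 (fun j => z q.1 * (x q.2 j : ℂ))
    ∀ (q : ℝ × E) (X Y : ℝ × E),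
      ((inner ℂ (Complex.I • fderiv ℝ τ q X) (fderiv ℝ τ q Y) : ℂ)).re = 0 := by
  intro τ q X Y
  set c := realToComplexCLM m with hc
  -- orthogonality: x u ⟂ dx(v)
  have horth : ∀ (u : E) (v : E), (inner ℝ (x u) ((fderiv ℝ x u) v) : ℝ) = 0 := by
    intro u v
    have hconst : (fun u => (inner ℝ (x u) (x u) : ℝ)) = fun _ => (1 : ℝ) := by
      funext u
      rw [real_inner_self_eq_norm_sq, hxs u]; norm_num
    have hderiv : fderiv ℝ (fun u => (inner ℝ (x u) (x u) : ℝ)) u v = 0 := by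
      rw [hconst]; simp
    rw [fderiv_inner_apply (𝕜 := ℝ) (hx u) (hx u)] at hderiv
    have hcomm := real_inner_comm (x u) ((fderiv ℝ x u) v)
    linarith
  -- τ as a smul
  have hτ : τ = fun q : ℝ × E => z q.1 • c (x q.2) := by
    funext q
    ext j
    rfl
  -- derivative of τ
  have h1 : HasFDerivAt (fun q : ℝ × E => z q.1)
      (((1 : ℝ →L[ℝ] ℝ).smulRight (deriv z q.1)).comp
        (ContinuousLinearMap.fst ℝ ℝ E)) q :=
    ((hz q.1).hasDerivAt.hasFDerivAt).comp q hasFDerivAt_fst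
  have h2 : HasFDerivAt (fun q : ℝ × E => c (x q.2))
      (c.comp ((fderiv ℝ x q.2).comp (ContinuousLinearMap.snd ℝ ℝ E))) q :=
    c.hasFDerivAt.comp q (((hx q.2).hasFDerivAt).comp q hasFDerivAt_snd)
  have hD : HasFDerivAt τ
      (z q.1 • (c.comp ((fderiv ℝ x q.2).comp (ContinuousLinearMap.snd ℝ ℝ E))) +
        ((((1 : ℝ →L[ℝ] ℝ).smulRight (deriv z q.1)).comp
          (ContinuousLinearMap.fst ℝ ℝ E)).smulRight (c (x q.2)))) q := by
    rw [hτ]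
    exact h1.smul h2
  have happ : ∀ W : ℝ × E, fderiv ℝ τ q W =
      z q.1 • c ((fderiv ℝ x q.2) W.2) + (W.1 • deriv z q.1) • c (x q.2) := by
    intro W
    rw [hD.fderiv]
    simp [ContinuousLinearMap.smulRight_apply]
  -- reduce the Kähler form to an imaginary part
  have key : ∀ A B : EuclideanSpace ℂ (Fin m),
      ((inner ℂ (Complex.I • A) B : ℂ)).re = ((inner ℂ A B : ℂ)).im := by
    intro A B
    rw [inner_smul_left]
    simp [Complex.mul_re]
  rw [happ X, happ Y, key]
  set a := z q.1 with ha
  set b := deriv z q.1 with hb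
  set v := c (x q.2) with hv
  set w := c ((fderiv ℝ x q.2) X.2) with hw
  set w' := c ((fderiv ℝ x q.2) Y.2) with hw'
  have hvw : (inner ℂ v w' : ℂ) = 0 := by
    rw [hv, hw', hc, inner_realToComplexCLM, horth]; simp
  have hwv : (inner ℂ w v : ℂ) = 0 := by
    rw [hv, hw, hc, inner_realToComplexCLM, real_inner_comm, horth]; simp
  have hvv : (inner ℂ v v : ℂ) = ((inner ℝ (x q.2) (x q.2) : ℝ) : ℂ) := by
    rw [hv, hc]; exact inner_realToComplexCLM m _ _
  have hww : (inner ℂ w w' : ℂ) =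
      ((inner ℝ ((fderiv ℝ x q.2) X.2) ((fderiv ℝ x q.2) Y.2) : ℝ) : ℂ) := by
    rw [hw, hw', hc]; exact inner_realToComplexCLM m _ _
  simp only [inner_add_left, inner_add_right, inner_smul_left, inner_smul_right,
    hvw, hwv, hvv, hww, mul_zero, add_zero, zero_add, Complex.real_smul, map_mul,
    Complex.conj_ofReal]
  simp only [Complex.add_im, Complex.mul_im, Complex.mul_re, Complex.conj_re,
    Complex.conj_im, Complex.ofReal_re, Complex.ofReal_im]
  ring
end

section
/- For a Lagrangian H-umbilical submanifold, the frame condition σ(e_1,e_1)=λJe_1, σ(e_j,e_j)=μJe_1 (j≥2), σ(e_1,e_j)=μJe_j (j≥2), σ(e_j,e_k)=0 (j≠k, j,k≥2) with mean curvature vector H⃗ ≠ 0 is equivalent to the frame-free identity σ(X,Y) = α⟨JX,H⃗⟩⟨JY,H⃗⟩H⃗ + β⟨H⃗,H⃗⟩(⟨X,Y⟩H⃗ + ⟨JX,H⃗⟩JY + ⟨JY,H⃗⟩JX), where α = (λ−3μ)/γ³, β = μ/γ³, γ = (λ+(n−1)μ)/n. -/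
open scoped RealInnerProductSpace

lemma sum_sigma_diag_invariant {T Nr : Type*} [NormedAddCommGroup T] [InnerProductSpace ℝ T]
    [NormedAddCommGroup Nr] [InnerProductSpace ℝ Nr] {n : ℕ}
    (σ : T →ₗ[ℝ] T →ₗ[ℝ] Nr)
    (b e : OrthonormalBasis (Fin n) ℝ T) :
    ∑ i, σ (b i) (b i) = ∑ i, σ (e i) (e i) := by
  have h1 : ∀ i : Fin n, σ (b i) (b i)
      = ∑ j, ∑ k, (⟪e k, b i⟫ * ⟪e j, b i⟫) • σ (e j) (e k) := by
    intro i
    conv_lhs => rw [← e.sum_repr' (b i)]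
    simp only [map_sum, map_smul, LinearMap.sum_apply, LinearMap.smul_apply,
      Finset.smul_sum, smul_smul]
    rw [Finset.sum_comm]
  calc ∑ i, σ (b i) (b i)
      = ∑ i, ∑ j, ∑ k, (⟪e k, b i⟫ * ⟪e j, b i⟫) • σ (e j) (e k) :=
        Finset.sum_congr rfl fun i _ => h1 i
    _ = ∑ j, ∑ k, (∑ i, ⟪e k, b i⟫ * ⟪b i, e j⟫) • σ (e j) (e k) := by
        rw [Finset.sum_comm]
        refine Finset.sum_congr rfl fun j _ => ?_
        rw [Finset.sum_comm]
        refine Finset.sum_congr rfl fun k _ => ?_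
        rw [← Finset.sum_smul]
        congr 1
        exact Finset.sum_congr rfl fun i _ => by rw [real_inner_comm (e j) (b i)]
    _ = ∑ j, ∑ k, (⟪e k, e j⟫ : ℝ) • σ (e j) (e k) := by
        refine Finset.sum_congr rfl fun j _ => Finset.sum_congr rfl fun k _ => ?_
        rw [b.sum_inner_mul_inner]
    _ = ∑ j, σ (e j) (e j) := by
        refine Finset.sum_congr rfl fun j _ => ?_
        rw [Finset.sum_eq_single j]
        · rw [orthonormal_iff_ite.mp e.orthonormal, if_pos rfl, one_smul]
        · intro k _ hk
          rw [orthonormal_iff_ite.mp e.orthonormal, if_neg hk, zero_smul]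
        · intro h; exact absurd (Finset.mem_univ j) h


/-- For a Lagrangian `H`-umbilical submanifold (pointwise linear-algebra model: tangent
space `T` with orthonormal basis, normal space `Nr`, complex structure `J : T ≃ N`,
symmetric bilinear second fundamental form `σ`, mean curvature vector
`H = (1/n) Σ σ(eᵢ,eᵢ) ≠ 0`), the frame condition
`σ(e₁,e₁)=λJe₁, σ(eⱼ,eⱼ)=μJe₁, σ(e₁,eⱼ)=μJeⱼ, σ(eⱼ,eₖ)=0 (j≠k)` is equivalent to the
frame-free identity
`σ(X,Y) = α⟨JX,H⟩⟨JY,H⟩H + β⟨H,H⟩(⟨X,Y⟩H + ⟨JX,H⟩JY + ⟨JY,H⟩JX)` with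
`α = (λ-3μ)/γ³`, `β = μ/γ³`, `γ = (λ+(n-1)μ)/n`. -/
theorem lagrangian_H_umbilical_frame_free_characterization
    {T Nr : Type*} [NormedAddCommGroup T] [InnerProductSpace ℝ T]
    [NormedAddCommGroup Nr] [InnerProductSpace ℝ Nr]
    (n : ℕ) (hn : 0 < n)
    (J : T ≃ₗᵢ[ℝ] Nr) (σ : T →ₗ[ℝ] T →ₗ[ℝ] Nr) (hσ : ∀ X Y, σ X Y = σ Y X)
    (b : OrthonormalBasis (Fin n) ℝ T)
    (H : Nr) (hHdef : H = (n : ℝ)⁻¹ • ∑ i : Fin n, σ (b i) (b i)) (hH : H ≠ 0) :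
    (∃ e : OrthonormalBasis (Fin n) ℝ T, ∃ lam mu : ℝ,
        σ (e ⟨0, hn⟩) (e ⟨0, hn⟩) = lam • J (e ⟨0, hn⟩) ∧
        (∀ j : Fin n, j ≠ ⟨0, hn⟩ → σ (e j) (e j) = mu • J (e ⟨0, hn⟩)) ∧
        (∀ j : Fin n, j ≠ ⟨0, hn⟩ → σ (e ⟨0, hn⟩) (e j) = mu • J (e j)) ∧
        (∀ j k : Fin n, j ≠ k → j ≠ ⟨0, hn⟩ → k ≠ ⟨0, hn⟩ → σ (e j) (e k) = 0)) ↔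
    (∃ lam mu : ℝ,
        ((lam + ((n : ℝ) - 1) * mu) / n) ≠ 0 ∧
        ∀ X Y : T,
          σ X Y =
            (((lam - 3 * mu) / ((lam + ((n : ℝ) - 1) * mu) / n) ^ 3) *
                (inner ℝ (J X) H : ℝ) * (inner ℝ (J Y) H : ℝ)) • H +
              ((mu / ((lam + ((n : ℝ) - 1) * mu) / n) ^ 3) * (inner ℝ H H : ℝ)) •
                ((inner ℝ X Y : ℝ) • H + (inner ℝ (J X) H : ℝ) • J Y +
                  (inner ℝ (J Y) H : ℝ) • J X)) := by
  have hee : ∀ (e : OrthonormalBasis (Fin n) ℝ T) (i j : Fin n),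
      (⟪e i, e j⟫ : ℝ) = if i = j then 1 else 0 := fun e i j =>
    orthonormal_iff_ite.mp e.orthonormal i j
  constructor
  · rintro ⟨e, lam, mu, h11, hjj, h1j, hjk⟩
    set z : Fin n := ⟨0, hn⟩ with hz
    set γ : ℝ := (lam + ((n : ℝ) - 1) * mu) / n with hγdef
    -- H = γ • J (e z)
    have hsum : ∑ i, σ (e i) (e i) = (lam + ((n : ℝ) - 1) * mu) • J (e z) := by
      rw [← Finset.add_sum_erase _ _ (Finset.mem_univ z), h11,
        Finset.sum_congr rfl (fun i hi => hjj i (Finset.ne_of_mem_erase hi)),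
        Finset.sum_const, Finset.card_erase_of_mem (Finset.mem_univ z),
        Finset.card_univ, Fintype.card_fin, ← Nat.cast_smul_eq_nsmul ℝ, smul_smul]
      rw [Nat.cast_sub hn, Nat.cast_one, add_smul, mul_smul]
    have hH1 : H = γ • J (e z) := by
      rw [hHdef, sum_sigma_diag_invariant σ b e, hsum, smul_smul, hγdef,
        inv_mul_eq_div]
    have hγ : γ ≠ 0 := by
      intro h0
      apply hH
      rw [hH1, h0, zero_smul]
    have hJHz : (⟪J (e z), H⟫ : ℝ) = γ := by
      rw [hH1, real_inner_smul_right, LinearIsometryEquiv.inner_map_map, hee, if_pos rfl,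
        mul_one]
    have hJHnz : ∀ i : Fin n, i ≠ z → (⟪J (e i), H⟫ : ℝ) = 0 := by
      intro i hi
      rw [hH1, real_inner_smul_right, LinearIsometryEquiv.inner_map_map, hee, if_neg hi,
        mul_zero]
    have hHH : (⟪H, H⟫ : ℝ) = γ * γ := by
      rw [hH1, real_inner_smul_right, real_inner_smul_left,
        LinearIsometryEquiv.inner_map_map, hee, if_pos rfl]
      ring
    refine ⟨lam, mu, hγ, ?_⟩
    -- define the frame-free bilinear map
    set A : ℝ := (lam - 3 * mu) / γ ^ 3 with hA
    set B : ℝ := mu / γ ^ 3 with hB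
    have key : ∀ X Y : T,
        σ X Y = (A * (⟪J X, H⟫ : ℝ) * (⟪J Y, H⟫ : ℝ)) • H +
          (B * (⟪H, H⟫ : ℝ)) • ((⟪X, Y⟫ : ℝ) • H + (⟪J X, H⟫ : ℝ) • J Y +
            (⟪J Y, H⟫ : ℝ) • J X) := by
      let τ : T →ₗ[ℝ] T →ₗ[ℝ] Nr := LinearMap.mk₂ ℝ
        (fun X Y => (A * (⟪J X, H⟫ : ℝ) * (⟪J Y, H⟫ : ℝ)) • H +
          (B * (⟪H, H⟫ : ℝ)) • ((⟪X, Y⟫ : ℝ) • H + (⟪J X, H⟫ : ℝ) • J Y +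
            (⟪J Y, H⟫ : ℝ) • J X))
        (fun X X' Y => by
          simp only [map_add, inner_add_left]
          match_scalars <;> ring)
        (fun c X Y => by
          simp only [map_smul, real_inner_smul_left]
          match_scalars <;> ring)
        (fun X Y Y' => by
          simp only [map_add, inner_add_left, inner_add_right]
          match_scalars <;> ring)
        (fun c X Y => by
          simp only [map_smul, real_inner_smul_left, real_inner_smul_right]
          match_scalars <;> ring)
      have hστ : σ = τ := by
        apply e.toBasis.ext
        intro j
        apply e.toBasis.ext
        intro k
        simp only [OrthonormalBasis.coe_toBasis]
        show σ (e j) (e k) = τ (e j) (e k)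
        have hτ : τ (e j) (e k) = (A * (⟪J (e j), H⟫ : ℝ) * (⟪J (e k), H⟫ : ℝ)) • H +
          (B * (⟪H, H⟫ : ℝ)) • ((⟪e j, e k⟫ : ℝ) • H + (⟪J (e j), H⟫ : ℝ) • J (e k) +
            (⟪J (e k), H⟫ : ℝ) • J (e j)) := rfl
        rw [hτ]
        by_cases hj : j = z
        · by_cases hk : k = z
          · subst hj; subst hk
            rw [h11, hJHz, hHH, hee, if_pos rfl, hH1, hA, hB]
            match_scalars
            field_simp
            ring
          · subst hj
            rw [h1j k hk, hJHz, hJHnz k hk, hHH, hee, if_neg (Ne.symm hk), hH1, hA, hB]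
            match_scalars <;> (field_simp; try ring)
        · by_cases hk : k = z
          · subst hk
            rw [hσ, h1j j hj, hJHz, hJHnz j hj, hHH, hee, if_neg hj, hH1, hA, hB]
            match_scalars <;> (field_simp; try ring)
          · by_cases hjk' : j = k
            · subst hjk'
              rw [hjj j hj, hJHnz j hj, hHH, hee, if_pos rfl, hH1, hA, hB]
              match_scalars <;> (field_simp; try ring)
            · rw [hjk j k hjk' hj hk, hJHnz j hj, hJHnz k hk, hHH, hee,
                if_neg hjk', hH1]
              match_scalars <;> ring
      intro X Y
      rw [hστ]
      rfl
    exact key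
  · rintro ⟨lam, mu, hγ, hid⟩
    haveI : FiniteDimensional ℝ T := Module.Finite.of_basis b.toBasis
    set z : Fin n := ⟨0, hn⟩ with hz
    have hh0 : ‖H‖ ≠ 0 := norm_ne_zero_iff.mpr hH
    set h : ℝ := ‖H‖ with hhdef
    set v : Fin n → T := fun _ => J.symm (h⁻¹ • H) with hv
    have hvnorm : ‖J.symm (h⁻¹ • H)‖ = 1 := by
      rw [J.symm.norm_map, norm_smul, norm_inv, norm_norm, inv_mul_cancel₀ hh0]
    have hortho : Orthonormal ℝ (Set.restrict {z} v) := by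
      rw [orthonormal_iff_ite]
      intro i j
      have hij : i = j := Subtype.ext (by
        have hi := i.2; have hj := j.2
        simp only [Set.mem_singleton_iff] at hi hj
        rw [hi, hj])
      subst hij
      rw [if_pos rfl]
      simp only [Set.restrict_apply, hv]
      rw [real_inner_self_eq_norm_sq]; change ‖J.symm (h⁻¹ • H)‖ ^ 2 = 1; rw [hvnorm]
      norm_num
    have hcard : Module.finrank ℝ T = Fintype.card (Fin n) := by
      rw [Module.finrank_eq_card_basis b.toBasis, Fintype.card_fin]
    obtain ⟨e, he⟩ := hortho.exists_orthonormalBasis_extension_of_card_eq hcard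
    have hez : e z = J.symm (h⁻¹ • H) := he z rfl
    have hJez : J (e z) = h⁻¹ • H := by rw [hez, LinearIsometryEquiv.apply_symm_apply]
    have hHJ : H = h • J (e z) := by
      rw [hJez, smul_smul, mul_inv_cancel₀ hh0, one_smul]
    have hJHz : (⟪J (e z), H⟫ : ℝ) = h := by
      rw [hJez, real_inner_smul_left, real_inner_self_eq_norm_sq, ← hhdef]
      field_simp
    have hJHnz : ∀ i : Fin n, i ≠ z → (⟪J (e i), H⟫ : ℝ) = 0 := by
      intro i hi
      rw [hHJ, real_inner_smul_right, LinearIsometryEquiv.inner_map_map, hee, if_neg hi,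
        mul_zero]
    have hHH : (⟪H, H⟫ : ℝ) = h * h := by
      rw [real_inner_self_eq_norm_sq, ← hhdef]; ring
    set A : ℝ := (lam - 3 * mu) / ((lam + ((n : ℝ) - 1) * mu) / n) ^ 3 with hA
    set B : ℝ := mu / ((lam + ((n : ℝ) - 1) * mu) / n) ^ 3 with hB
    refine ⟨e, A * h ^ 3 + 3 * (B * h ^ 3), B * h ^ 3, ?_, ?_, ?_, ?_⟩
    · rw [hid, hJHz, hHH, hee, if_pos rfl, hHJ]
      match_scalars; ring
    · intro j hj
      rw [hid, hJHnz j hj, hHH, hee, if_pos rfl, hHJ]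
      match_scalars <;> ring
    · intro j hj
      rw [hid, hJHz, hJHnz j hj, hHH, hee, if_neg (Ne.symm hj), hHJ]
      match_scalars <;> ring
    · intro j k hjk hj hk
      rw [hid, hJHnz j hj, hJHnz k hk, hHH, hee, if_neg hjk, hHJ]
      match_scalars <;> ring
end
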